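/- arXiv:1312.6839 — 8 statements merged into one kernel-verified Lean document; each statement's English description precedes it below -/
import Mathlib

section
/- For every non-negative integer k, \sum_{i=0}^{k} \sum_{j=0}^{k} (-1)^{i+j} \binom{k}{i}\binom{k}{j} (i-j)^{2k} = (-1)^k (2k)!. -/
open Finset
def T (k m : ℕ) : ℤ := ∑ i ∈ range (k+1), (-1)^i * (k.choose i) * (i:ℤ)^m

lemma T_rec (k m : ℕ) :
    T (k+1) m = T k m - ∑ i ∈ range (k+1), (-1:ℤ)^i * (k.choose i) * ((i:ℤ)+1)^m := by
  have hg : ∑ i ∈ range (k+1), ((-1:ℤ)^(i+1) * (k.choose (i+1)) * ((i:ℤ)+1)^m)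
      = T k m - (0:ℤ)^m := by
    have h2 : ∑ i ∈ range (k+2), ((-1:ℤ)^i * (k.choose i) * (i:ℤ)^m) = T k m := by
      rw [Finset.sum_range_succ]; simp [T]
    rw [Finset.sum_range_succ'] at h2
    push_cast at h2
    simp only [Nat.choose_zero_right, Nat.cast_one, one_mul, mul_one] at h2
    linarith [h2]
  rw [T, Finset.sum_range_succ']
  simp only [Nat.choose_succ_succ]
  push_cast
  have split : ∀ i ∈ range (k+1), ((-1:ℤ))^(i+1) * ((k.choose i : ℤ) + (k.choose (i+1))) * ((i:ℤ)+1)^m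
      = -((-1:ℤ)^i * (k.choose i) * ((i:ℤ)+1)^m) + ((-1:ℤ)^(i+1) * (k.choose (i+1)) * ((i:ℤ)+1)^m) := by
    intro i _; ring
  rw [Finset.sum_congr rfl split, Finset.sum_add_distrib, Finset.sum_neg_distrib, hg]
  simp only [Nat.choose_zero_right, Nat.cast_one, one_mul, mul_one]
  ring

lemma T_succ (k m : ℕ) : T (k+1) m = -∑ l ∈ range m, (m.choose l : ℤ) * T k l := by
  rw [T_rec]
  have h : ∑ i ∈ range (k+1), (-1:ℤ)^i * (k.choose i) * ((i:ℤ)+1)^m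
      = ∑ l ∈ range (m+1), (m.choose l : ℤ) * T k l := by
    simp_rw [add_pow, one_pow, mul_one, Finset.mul_sum]
    rw [Finset.sum_comm]
    apply Finset.sum_congr rfl
    intro l _
    rw [T, Finset.mul_sum]
    apply Finset.sum_congr rfl
    intro i _
    ring
  rw [h, Finset.sum_range_succ, Nat.choose_self]
  push_cast
  ring

lemma T_eq_zero : ∀ k m : ℕ, m < k → T k m = 0 := by
  intro k
  induction k with
  | zero => intro m hm; omega
  | succ k ih =>
    intro m hm
    rw [T_succ]
    rw [Finset.sum_eq_zero, neg_zero]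
    intro l hl
    rw [ih l (by simp at hl; omega), mul_zero]

lemma T_diag (k : ℕ) : T k k = (-1)^k * (Nat.factorial k) := by
  induction k with
  | zero => simp [T]
  | succ k ih =>
    rw [T_succ, Finset.sum_range_succ, Finset.sum_eq_zero, zero_add, ih,
      Nat.choose_succ_self_right]
    · rw [Nat.factorial_succ]
      push_cast [Nat.factorial_succ]
      ring
    · intro l hl
      rw [T_eq_zero k l (by simp at hl; omega), mul_zero]

theorem S_eq_at_2k (k : ℕ) :
    (∑ i ∈ Finset.range (k+1), ∑ j ∈ Finset.range (k+1),
      (-1 : ℤ)^(i+j) * (k.choose i) * (k.choose j) * ((i : ℤ) - j)^(2*k)) =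
    (-1 : ℤ)^k * (Nat.factorial (2*k)) := by
  set n := 2*k with hn
  have step1 : (∑ i ∈ Finset.range (k+1), ∑ j ∈ Finset.range (k+1),
      (-1 : ℤ)^(i+j) * (k.choose i) * (k.choose j) * ((i : ℤ) - j)^n)
      = ∑ m ∈ range (n+1), ∑ i ∈ range (k+1), ∑ j ∈ range (k+1),
        ((n.choose m : ℤ) * (-1)^(n-m)) * ((-1)^i * (k.choose i) * (i:ℤ)^m)
          * ((-1)^j * (k.choose j) * (j:ℤ)^(n-m)) := by
    symm
    rw [Finset.sum_comm]
    apply Finset.sum_congr rfl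
    intro i _
    rw [Finset.sum_comm]
    apply Finset.sum_congr rfl
    intro j _
    symm
    rw [sub_eq_add_neg, add_pow, Finset.mul_sum]
    apply Finset.sum_congr rfl
    intro m hm
    rw [neg_pow (j:ℤ) (n-m), pow_add]
    ring
  have step2 : ∀ m, (∑ i ∈ range (k+1), ∑ j ∈ range (k+1),
      ((n.choose m : ℤ) * (-1)^(n-m)) * ((-1)^i * (k.choose i) * (i:ℤ)^m)
        * ((-1)^j * (k.choose j) * (j:ℤ)^(n-m)))
      = ((n.choose m : ℤ) * (-1)^(n-m)) * T k m * T k (n-m) := by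
    intro m
    rw [T, T, mul_assoc, Finset.sum_mul_sum, Finset.mul_sum]
    apply Finset.sum_congr rfl
    intro i _
    rw [Finset.mul_sum]
    apply Finset.sum_congr rfl
    intro j _
    ring
  rw [step1, Finset.sum_congr rfl (fun m _ => step2 m),
    Finset.sum_eq_single k ?_ (by intro h; exact absurd (Finset.mem_range.mpr (by omega)) h)]
  · have h2 : n - k = k := by omega
    have h3 : n.choose k * (Nat.factorial k) * (Nat.factorial k) = Nat.factorial n := by
      have := Nat.choose_mul_factorial_mul_factorial (show k ≤ n by omega)
      rwa [h2] at this
    have h4 : ((Nat.factorial n : ℤ)) = (n.choose k) * (Nat.factorial k) * (Nat.factorial k) := by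
      exact_mod_cast h3.symm
    have hsq : ((-1:ℤ))^k * (-1)^k = 1 := by
      rw [← pow_add, Even.neg_one_pow ⟨k, by ring⟩]
    rw [h2, T_diag, h4]
    linear_combination ((n.choose k : ℤ) * ((Nat.factorial k : ℤ))^2 * (-1)^k) * hsq
  · intro m hm hne
    rcases lt_or_gt_of_ne hne with h | h
    · rw [T_eq_zero k m h, mul_zero, zero_mul]
    · rw [T_eq_zero k (n-m) (by simp at hm; omega), mul_zero]
end

section
/- For every non-negative integer k, \sum_{i=0}^{k} \sum_{j=0}^{k} (-1)^{i+j} \binom{k}{i}\binom{k}{j} (i-j)^{2k+2} = (-1)^k (2k)! \cdot \frac{k(k+1)(2k+1)}{6}. -/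
open Finset

noncomputable def F (k a : ℕ) : ℤ := ∑ i ∈ range (k+1), (-1)^i * (k.choose i) * (i:ℤ)^a

lemma Frec (k a : ℕ) : F (k+1) a = -∑ b ∈ range a, (a.choose b : ℤ) * F k b := by
  have h1 : F (k+1) a
      = F k a - ∑ i ∈ range (k+1), (-1)^i * (k.choose i) * ((i:ℤ)+1)^a := by
    have e1 : F (k+1) a = (∑ i ∈ range (k+1),
        (-1)^(i+1) * ((k.choose (i+1) : ℤ) + k.choose i) * ((i:ℤ)+1)^a) + (0:ℤ)^a := by
      rw [F, Finset.sum_range_succ' (fun i => (-1:ℤ)^i * ((k+1).choose i) * (i:ℤ)^a)]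
      simp [Nat.choose_succ_succ]
      apply Finset.sum_congr rfl
      intro i _
      ring
    have e2 : F k a = (∑ i ∈ range k,
        (-1:ℤ)^(i+1) * (k.choose (i+1) : ℤ) * ((i:ℤ)+1)^a) + (0:ℤ)^a := by
      rw [F, Finset.sum_range_succ' (fun i => (-1:ℤ)^i * (k.choose i) * (i:ℤ)^a)]
      simp
    have e3 : (∑ i ∈ range (k+1), (-1:ℤ)^(i+1) * (k.choose (i+1) : ℤ) * ((i:ℤ)+1)^a)
        = ∑ i ∈ range k, (-1:ℤ)^(i+1) * (k.choose (i+1) : ℤ) * ((i:ℤ)+1)^a := by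
      rw [Finset.sum_range_succ, Nat.choose_succ_self]
      simp
    rw [e1, e2]
    have : ∀ i ∈ range (k+1), (-1:ℤ)^(i+1) * ((k.choose (i+1) : ℤ) + k.choose i) * ((i:ℤ)+1)^a
        = (-1:ℤ)^(i+1) * (k.choose (i+1) : ℤ) * ((i:ℤ)+1)^a
          + (-(1:ℤ)) * ((-1)^i * (k.choose i) * ((i:ℤ)+1)^a) := by
      intro i _; ring
    rw [Finset.sum_congr rfl this, Finset.sum_add_distrib, e3, ← Finset.mul_sum]
    ring
  have h2 : ∀ i : ℕ, ((i:ℤ)+1)^a = ∑ b ∈ range (a+1), (a.choose b : ℤ) * (i:ℤ)^b := by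
    intro i
    rw [add_pow]
    apply Finset.sum_congr rfl
    intro b _
    simp [mul_comm]
  have h3 : (∑ i ∈ range (k+1), (-1:ℤ)^i * (k.choose i) * ((i:ℤ)+1)^a)
      = ∑ b ∈ range (a+1), (a.choose b : ℤ) * F k b := by
    simp only [h2, Finset.mul_sum]
    rw [Finset.sum_comm]
    apply Finset.sum_congr rfl
    intro b _
    rw [F, Finset.mul_sum]
    apply Finset.sum_congr rfl
    intro i _
    ring
  rw [h1, h3, Finset.sum_range_succ, Nat.choose_self]
  push_cast
  ring

lemma F_eq_zero : ∀ k a : ℕ, a < k → F k a = 0 := by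
  intro k
  induction k with
  | zero => intro a h; omega
  | succ k ih =>
    intro a h
    rw [Frec]
    have : ∀ b ∈ range a, (a.choose b : ℤ) * F k b = 0 := by
      intro b hb
      rw [mem_range] at hb
      rw [ih b (by omega), mul_zero]
    rw [Finset.sum_congr rfl this]
    simp

lemma F_diag : ∀ k : ℕ, F k k = (-1)^k * (Nat.factorial k) := by
  intro k
  induction k with
  | zero => simp [F]
  | succ k ih =>
    rw [Frec, Finset.sum_range_succ, ih, Nat.choose_succ_self_right]
    have : ∀ b ∈ range k, ((k+1).choose b : ℤ) * F k b = 0 := by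
      intro b hb; rw [mem_range] at hb; rw [F_eq_zero k b hb, mul_zero]
    rw [Finset.sum_congr rfl this]
    rw [Nat.factorial_succ]
    push_cast
    ring_nf
    simp [pow_succ]


lemma six_dvd (k : ℕ) : 6 ∣ k*(k+1)*(2*k+1) := by
  induction k with
  | zero => simp
  | succ n ihn =>
    obtain ⟨c, hc⟩ := ihn
    exact ⟨c + (n+1)*(n+1), by nlinarith [hc]⟩

lemma choose2 (k : ℕ) : (k+2).choose k * 2 = (k+2) * (k+1) := by
  induction k with
  | zero => rfl
  | succ n ihn =>
    rw [show n+1+2 = (n+2)+1 by rfl, Nat.choose_succ_succ, Nat.choose_succ_self_right]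
    nlinarith [ihn]

lemma F_succ : ∀ k : ℕ, 2 * F k (k+1) = (-1)^k * (Nat.factorial k) * (k * (k+1)) := by
  intro k
  induction k with
  | zero => simp [F]
  | succ k ih =>
    rw [Frec]
    have hz : ∀ b ∈ range k, ((k+2).choose b : ℤ) * F k b = 0 := by
      intro b hb; rw [mem_range] at hb; rw [F_eq_zero k b hb, mul_zero]
    rw [show k+1+1 = k+2 by rfl, Finset.sum_range_succ, Finset.sum_range_succ,
      Finset.sum_congr rfl hz]
    have hc1 : ((k+2).choose k : ℤ) * 2 = (k+2) * (k+1) := by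
      exact_mod_cast congrArg (Nat.cast : ℕ → ℤ) (choose2 k)
    have hc2 : ((k+2).choose (k+1) : ℤ) = (k+2) := by
      exact_mod_cast congrArg (Nat.cast : ℕ → ℤ) (Nat.choose_succ_self_right (k+1))
    have hd := F_diag k
    rw [hc2, hd, Nat.factorial_succ]
    push_cast
    simp only [Finset.sum_const_zero]
    linear_combination (-((k:ℤ)+2))*ih + (-(-1:ℤ)^k*(Nat.factorial k : ℤ))*hc1

lemma choose3 (k : ℕ) : (k+3).choose k * 6 = (k+3) * (k+2) * (k+1) := by
  induction k with
  | zero => rfl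
  | succ n ihn =>
    rw [show n+1+3 = (n+3)+1 by rfl, Nat.choose_succ_succ]
    nlinarith [ihn, choose2 (n+1)]

lemma F_succ2 : ∀ k : ℕ, 24 * F k (k+2) = (-1)^k * (Nat.factorial k) * (k * (k+1) * (k+2) * (3*k+1)) := by
  intro k
  induction k with
  | zero => simp [F]
  | succ k ih =>
    rw [show k+1+2 = k+3 by rfl, Frec]
    have hz : ∀ b ∈ range k, ((k+3).choose b : ℤ) * F k b = 0 := by
      intro b hb; rw [mem_range] at hb; rw [F_eq_zero k b hb, mul_zero]
    rw [Finset.sum_range_succ, Finset.sum_range_succ, Finset.sum_range_succ,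
      Finset.sum_congr rfl hz]
    have hc3 : ((k+3).choose k : ℤ) * 6 = (k+3) * (k+2) * (k+1) := by
      exact_mod_cast congrArg (Nat.cast : ℕ → ℤ) (choose3 k)
    have hc2' : ((k+3).choose (k+1) : ℤ) * 2 = (k+3) * (k+2) := by
      have := choose2 (k+1)
      rw [show k+1+2 = k+3 by rfl] at this
      exact_mod_cast congrArg (Nat.cast : ℕ → ℤ) this
    have hc1' : ((k+3).choose (k+2) : ℤ) = (k+3) := by
      exact_mod_cast congrArg (Nat.cast : ℕ → ℤ) (Nat.choose_succ_self_right (k+2))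
    have hd := F_diag k
    have hB := F_succ k
    rw [hc1', hd, Nat.factorial_succ]
    push_cast
    simp only [Finset.sum_const_zero]
    linear_combination (-4*(-1:ℤ)^k*(Nat.factorial k : ℤ))*hc3
      + (-6*(-1:ℤ)^k*(Nat.factorial k : ℤ)*k*((k:ℤ)+1))*hc2'
      + (-12*((k+3).choose (k+1) : ℤ))*hB + (-((k:ℤ)+3))*ih

theorem S_eq_at_2k_add_2 (k : ℕ) :
    (∑ i ∈ Finset.range (k+1), ∑ j ∈ Finset.range (k+1),
      (-1 : ℤ)^(i+j) * (k.choose i) * (k.choose j) * ((i : ℤ) - j)^(2*k+2)) =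
    (-1 : ℤ)^k * (Nat.factorial (2*k)) * ((k * (k+1) * (2*k+1)) / 6 : ℕ) := by
  have hsign : ∀ m : ℕ, (-1:ℤ)^(m+(2*k+2)) = (-1)^m := by
    intro m
    rw [pow_add, show 2*k+2 = 2*(k+1) by ring, pow_mul]
    norm_num
  have step1 : (∑ i ∈ Finset.range (k+1), ∑ j ∈ Finset.range (k+1),
      (-1 : ℤ)^(i+j) * (k.choose i) * (k.choose j) * ((i : ℤ) - j)^(2*k+2))
      = ∑ m ∈ range (2*k+3), (-1:ℤ)^m * ((2*k+2).choose m) * F k m * F k (2*k+2-m) := by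
    have e1 : ∀ i j : ℕ, (-1 : ℤ)^(i+j) * (k.choose i) * (k.choose j) * ((i : ℤ) - j)^(2*k+2)
        = ∑ m ∈ range (2*k+3), ((-1:ℤ)^m * ((2*k+2).choose m))
            * ((-1:ℤ)^i * (k.choose i) * (i:ℤ)^m)
            * ((-1:ℤ)^j * (k.choose j) * (j:ℤ)^(2*k+2-m)) := by
      intro i j
      rw [sub_pow, Finset.mul_sum]
      apply Finset.sum_congr rfl
      intro m _
      rw [hsign m, pow_add]
      ring
    have e2 : ∀ m : ℕ, (-1:ℤ)^m * ((2*k+2).choose m) * F k m * F k (2*k+2-m)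
        = ∑ i ∈ range (k+1), ∑ j ∈ range (k+1),
            ((-1:ℤ)^m * ((2*k+2).choose m))
            * ((-1:ℤ)^i * (k.choose i) * (i:ℤ)^m)
            * ((-1:ℤ)^j * (k.choose j) * (j:ℤ)^(2*k+2-m)) := by
      intro m
      rw [F, F, mul_assoc, Finset.sum_mul_sum, Finset.mul_sum]
      refine Finset.sum_congr rfl fun i _ => ?_
      rw [Finset.mul_sum]
      exact Finset.sum_congr rfl fun j _ => by ring
    simp only [e1, e2]
    conv_rhs => rw [Finset.sum_comm]
    exact Finset.sum_congr rfl fun i _ => Finset.sum_comm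
  rw [step1]
  have htri : ({k, k+1, k+2} : Finset ℕ) ⊆ range (2*k+3) := by
    intro x hx
    simp only [Finset.mem_insert, Finset.mem_singleton] at hx
    rw [mem_range]; omega
  have hvan : ∀ x ∈ range (2*k+3), x ∉ ({k, k+1, k+2} : Finset ℕ) →
      (-1:ℤ)^x * ((2*k+2).choose x) * F k x * F k (2*k+2-x) = 0 := by
    intro x hx hnx
    simp only [Finset.mem_insert, Finset.mem_singleton, not_or] at hnx
    rw [mem_range] at hx
    rcases lt_or_ge x k with h | h
    · rw [F_eq_zero k x h]; ring
    · have h2 : 2*k+2-x < k := by omega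
      rw [F_eq_zero k _ h2]; ring
  rw [← Finset.sum_subset htri hvan]
  rw [Finset.sum_insert (by simp), Finset.sum_insert (by simp),
    Finset.sum_singleton]
  rw [show 2*k+2-k = k+2 from by omega, show 2*k+2-(k+1) = k+1 from by omega,
    show 2*k+2-(k+2) = k from by omega]
  have hsym : ((2*k+2).choose (k+2) : ℤ) = ((2*k+2).choose k : ℤ) := by
    have h := Nat.choose_symm (show k+2 ≤ 2*k+2 by omega)
    rw [show 2*k+2-(k+2) = k from by omega] at h
    exact_mod_cast congrArg (Nat.cast : ℕ → ℤ) h.symm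
  have hfac2 : ((k+2).factorial : ℤ) = (k+2) * ((k+1) * (k.factorial : ℤ)) := by
    rw [Nat.factorial_succ, Nat.factorial_succ]; push_cast; ring
  have hfacQ : (((2*k+2)).factorial : ℤ) = (2*k+2) * ((2*k+1) * ((2*k).factorial : ℤ)) := by
    rw [show 2*k+2 = (2*k+1)+1 from by omega, Nat.factorial_succ, Nat.factorial_succ]
    push_cast; ring
  have hX : ((2*k+2).choose k : ℤ) * (k.factorial : ℤ) * ((k+2) * ((k+1) * (k.factorial : ℤ)))
      = (2*k+2) * ((2*k+1) * ((2*k).factorial : ℤ)) := by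
    have h := Nat.choose_mul_factorial_mul_factorial (show k ≤ 2*k+2 by omega)
    rw [show 2*k+2-k = k+2 from by omega] at h
    have h' : ((2*k+2).choose k : ℤ) * (k.factorial : ℤ) * ((k+2).factorial : ℤ)
        = ((2*k+2).factorial : ℤ) := by exact_mod_cast congrArg (Nat.cast : ℕ → ℤ) h
    rw [hfac2, hfacQ] at h'
    exact h'
  have hY : ((2*k+2).choose (k+1) : ℤ) * ((k+1) * (k.factorial : ℤ)) * ((k+1) * (k.factorial : ℤ))
      = (2*k+2) * ((2*k+1) * ((2*k).factorial : ℤ)) := by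
    have h := Nat.choose_mul_factorial_mul_factorial (show k+1 ≤ 2*k+2 by omega)
    rw [show 2*k+2-(k+1) = k+1 from by omega] at h
    have h' : ((2*k+2).choose (k+1) : ℤ) * ((k+1).factorial : ℤ) * ((k+1).factorial : ℤ)
        = ((2*k+2).factorial : ℤ) := by exact_mod_cast congrArg (Nat.cast : ℕ → ℤ) h
    rw [Nat.factorial_succ, hfacQ] at h'
    push_cast at h' ⊢
    linear_combination h'
  have hm : ((k*(k+1)*(2*k+1)/6 : ℕ) : ℤ) * 6 = (k : ℤ) * (k+1) * (2*k+1) := by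
    have := Nat.div_mul_cancel (six_dvd k)
    exact_mod_cast congrArg (Nat.cast : ℕ → ℤ) this
  have hss : (-1:ℤ)^k * (-1:ℤ)^k = 1 := by
    rw [← pow_add, show k+k = 2*k from by omega, pow_mul]; norm_num
  have hd := F_diag k
  have hB := F_succ k
  have hC := F_succ2 k
  rw [hsym, hd]
  generalize hMdef : (k*(k+1)*(2*k+1)/6 : ℕ) = M at hm
  simp only [pow_succ]
  refine mul_left_cancel₀ (show (48:ℤ) ≠ 0 by norm_num) ?_
  push_cast at hB hC ⊢
  linear_combination (4*((-1:ℤ)^k)^2*(k.factorial:ℤ)*((2*k+2).choose k : ℤ))*hC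
    + (-12*(-1:ℤ)^k*((2*k+2).choose (k+1) : ℤ)*(2*(F k (k+1)) + (-1:ℤ)^k*(k.factorial:ℤ)*(k*((k:ℤ)+1))))*hB
    + (4*((-1:ℤ)^k)^3*k*(3*(k:ℤ)+1))*hX
    + (-12*((-1:ℤ)^k)^3*(k:ℤ)^2)*hY
    + (-8*(-1:ℤ)^k*((2*k).factorial:ℤ))*hm
    + (8*(-1:ℤ)^k*k*((k:ℤ)+1)*(2*(k:ℤ)+1)*((2*k).factorial:ℤ))*hss
end

section
/- Let p \geq 5 be a prime. Then there exists an element m of the field \mathbb{F}_{p^2} such that m is not a square in \mathbb{F}_{p^2} and the norm of 1+m over \mathbb{F}_p equals 4, i.e. (1+m)^{p+1} = 4. -/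
open Finset

lemma key_exists (p : ℕ) [Fact p.Prime] (hp5 : 5 ≤ p) :
    ∃ t : ZMod p, ¬ IsSquare (t^2 - 16) ∧ ¬ IsSquare (5 - t) := by
  have hp : p.Prime := Fact.out
  have hp2 : p ≠ 2 := by omega
  have hchar : ringChar (ZMod p) ≠ 2 := by rw [ZMod.ringChar_zmod_n]; exact hp2
  have htwo : (2 : ZMod p) ≠ 0 := by
    intro h
    have h2 : ((2 : ℕ) : ZMod p) = 0 := by exact_mod_cast h
    rw [ZMod.natCast_eq_zero_iff] at h2
    exact absurd (Nat.le_of_dvd (by norm_num) h2) (by omega)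
  by_contra hcon
  push_neg at hcon
  set A : Finset (ZMod p) := univ.filter (fun t => ¬ IsSquare (t^2 - 16)) with hA
  set C : Finset (ZMod p) := univ.filter (fun t => IsSquare (5 - t) ∧ 5 - t ≠ 0) with hC
  set NR : Finset (ZMod p) := univ.filter (fun x => ¬ IsSquare x) with hNR
  set SQ : Finset (ZMod p) := univ.filter (fun x => IsSquare x ∧ x ≠ 0) with hSQ
  have h4C : (4 : ZMod p) ∈ C := by
    simp only [hC, mem_filter, mem_univ, true_and]
    constructor
    · have : (5 : ZMod p) - 4 = 1 := by ring
      rw [this]; exact IsSquare.one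
    · have : (5 : ZMod p) - 4 = 1 := by ring
      rw [this]; exact one_ne_zero
  have hAC : A ⊆ C.erase 4 := by
    intro t ht
    simp only [hA, mem_filter, mem_univ, true_and] at ht
    have hsq5 := hcon t ht
    have ht4 : t ≠ 4 := by
      rintro rfl
      exact ht (by rw [show (4:ZMod p)^2 - 16 = 0 by ring]; exact IsSquare.zero)
    have ht5 : (5:ZMod p) - t ≠ 0 := by
      intro h
      have : t = 5 := by linear_combination -h
      subst this
      exact ht ⟨3, by ring⟩
    exact mem_erase.mpr ⟨ht4, by simp only [hC, mem_filter, mem_univ, true_and]; exact ⟨hsq5, ht5⟩⟩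
  have hcard1 : A.card ≤ C.card - 1 := by
    calc A.card ≤ (C.erase 4).card := card_le_card hAC
    _ = C.card - 1 := card_erase_of_mem h4C
  have hCSQ : C.card = SQ.card := by
    apply card_bij (fun t _ => 5 - t)
    · intro t ht
      simp only [hC, mem_filter, mem_univ, true_and] at ht
      simp only [hSQ, mem_filter, mem_univ, true_and]
      exact ht
    · intro a ha b hb h
      linear_combination -h
    · intro b hb
      refine ⟨5 - b, ?_, by ring⟩
      simp only [hSQ, mem_filter, mem_univ, true_and] at hb
      simp only [hC, mem_filter, mem_univ, true_and]
      constructor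
      · rw [show (5:ZMod p) - (5 - b) = b by ring]; exact hb.1
      · rw [show (5:ZMod p) - (5 - b) = b by ring]; exact hb.2
  have h8 : (8 : ZMod p) ≠ 0 := by
    intro h
    have : (8 : ZMod p) = 2^3 := by norm_num
    rw [this] at h
    exact htwo (pow_eq_zero_iff (by norm_num) |>.mp h)
  have hNRA : NR.card ≤ A.card := by
    apply card_le_card_of_injOn (fun w => 4 * (w + 1) / (w - 1))
    · intro w hw
      simp only [hNR, mem_coe, mem_filter, mem_univ, true_and] at hw
      have hw1 : w - 1 ≠ 0 := by
        intro h
        have : w = 1 := by linear_combination h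
        exact hw (this ▸ IsSquare.one)
      simp only [hA, mem_coe, mem_filter, mem_univ, true_and]
      intro hsq
      apply hw
      have heq : (4 * (w + 1) / (w - 1))^2 - 16 = 64 * w / (w-1)^2 := by
        field_simp
        ring
      rw [heq] at hsq
      have : w = (64 * w / (w-1)^2) * ((w-1)/8)^2 := by
        field_simp
        ring
      rw [this]
      exact hsq.mul ⟨(w-1)/8, by ring⟩
    · intro a ha b hb h
      simp only [hNR, coe_filter, Set.mem_setOf_eq, mem_univ, true_and] at ha hb
      have ha1 : a - 1 ≠ 0 := fun hh => ha (by rw [show a = 1 by linear_combination hh]; exact IsSquare.one)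
      have hb1 : b - 1 ≠ 0 := fun hh => hb (by rw [show b = 1 by linear_combination hh]; exact IsSquare.one)
      field_simp at h
      have h8ab : 8 * (b - a) = 0 := by linear_combination h
      rcases mul_eq_zero.mp h8ab with h' | h'
      · exact absurd h' h8
      · linear_combination -h'
  have hSQNR : SQ.card ≤ NR.card := by
    obtain ⟨c, hc⟩ := FiniteField.exists_nonsquare (F := ZMod p) hchar
    have hc0 : c ≠ 0 := fun h => hc (h ▸ IsSquare.zero)
    apply card_le_card_of_injOn (fun x => c * x)
    · intro x hx
      simp only [hSQ, mem_coe, mem_filter, mem_univ, true_and] at hx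
      simp only [hNR, mem_coe, mem_filter, mem_univ, true_and]
      intro hsq
      apply hc
      obtain ⟨y, hy⟩ := hx.1
      have hy0 : y ≠ 0 := by rintro rfl; exact hx.2 (by rw [hy, mul_zero])
      have hyy : y * y⁻¹ = 1 := mul_inv_cancel₀ hy0
      have : c = (c * x) * (y⁻¹ * y⁻¹) := by
        rw [hy]
        calc c = c * ((y * y⁻¹) * (y * y⁻¹)) := by rw [hyy]; ring
        _ = c * (y * y) * (y⁻¹ * y⁻¹) := by ring
      rw [this]
      exact hsq.mul ⟨y⁻¹, rfl⟩
    · intro a _ b _ h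
      exact mul_left_cancel₀ hc0 h
  have h4C' : 1 ≤ C.card := card_pos.mpr ⟨4, h4C⟩
  omega

theorem exists_nonsquare_norm_four (p : ℕ) (hp : p.Prime) (hp5 : 5 ≤ p)
    (F : Type) [Field F] [Fintype F] (hF : Fintype.card F = p^2) :
    ∃ m : F, ¬ (∃ y : F, y^2 = m) ∧ (1 + m)^(p+1) = 4 := by
  haveI : Fact p.Prime := ⟨hp⟩
  -- characteristic of F is p
  have hcharF : CharP F p := by
    obtain ⟨q, hq⟩ := CharP.exists F
    haveI := hq
    obtain ⟨n, hqp, hcard⟩ := FiniteField.card F q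
    rw [hF] at hcard
    have hqdvd : q ∣ p ^ 2 := hcard ▸ dvd_pow_self q n.pos.ne'
    have : q = p :=
      (Nat.prime_dvd_prime_iff_eq hqp hp).mp (hqp.dvd_of_dvd_pow (n := 2) hqdvd)
    exact this ▸ hq
  haveI := hcharF
  obtain ⟨t, hns1, hns2⟩ := key_exists p hp5
  set k := p / 2 with hk
  have hpk : p = 2 * k + 1 := by
    have := hp.two_le
    have hodd := hp.odd_of_ne_two (by omega)
    obtain ⟨j, hj⟩ := hodd
    omega
  set φ : ZMod p →+* F := ZMod.castHom dvd_rfl F with hφ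
  have hφinj : Function.Injective φ := φ.injective
  have hchar2 : ringChar F ≠ 2 := by
    rw [ringChar.eq F p]; omega
  have hcharZ : ringChar (ZMod p) ≠ 2 := by
    rw [ZMod.ringChar_zmod_n]; omega
  have hc0 : t^2 - 16 ≠ 0 := fun h => hns1 (h ▸ IsSquare.zero)
  have hcF0 : φ (t^2 - 16) ≠ 0 := fun h => hc0 (hφinj (by rw [h, map_zero]))
  have hsq2 : p ^ 2 = 2 * ((p + 1) * k) + 1 := by rw [hpk]; ring
  have hexp1 : Fintype.card F / 2 = (p + 1) * k := by
    rw [hF]; omega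
  have hsqc : IsSquare (φ (t^2 - 16)) := by
    rw [FiniteField.isSquare_iff hchar2 hcF0, hexp1, ← map_pow]
    have h1 : (t^2 - 16) ^ ((p + 1) * k) = 1 := by
      have heq : (p + 1) * k = (p - 1) * (k + 1) := by
        have ha : p + 1 = 2 * (k + 1) := by omega
        have hb : p - 1 = 2 * k := by omega
        rw [ha, hb]; ring
      rw [heq, pow_mul, ZMod.pow_card_sub_one_eq_one hc0, one_pow]
    rw [h1, map_one]
  obtain ⟨δ, hδ⟩ := hsqc
  have hδ0 : δ ≠ 0 := by rintro rfl; exact hcF0 (by rw [hδ, mul_zero])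
  -- δ^p = -δ
  have hδp : δ ^ p = -δ := by
    have hsq : (δ ^ p) * (δ ^ p) = δ * δ := by
      rw [← mul_pow, ← hδ, ← map_pow, ZMod.pow_card]
    have hz : (δ ^ p - δ) * (δ ^ p + δ) = 0 := by linear_combination hsq
    rcases mul_eq_zero.mp hz with h | h
    · exfalso
      have hδpδ : δ ^ p = δ := by linear_combination h
      have hstep : δ ^ (p - 1) * δ = 1 * δ := by
        rw [← pow_succ, show p - 1 + 1 = p by omega, hδpδ, one_mul]
      have hδ1 : δ ^ (p - 1) = 1 := mul_right_cancel₀ hδ0 hstep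
      have hφ1 : φ ((t^2 - 16) ^ k) = 1 := by
        rw [map_pow, hδ, ← pow_two]
        have : (δ ^ 2) ^ k = δ ^ (p - 1) := by rw [← pow_mul]; congr 1; omega
        rw [this, hδ1]
      have h1 : (t^2 - 16) ^ k = 1 := hφinj (by rw [hφ1, map_one])
      exact hns1 (by rw [FiniteField.isSquare_iff hcharZ hc0, ZMod.card]; exact h1)
    · linear_combination h
  have h2F : (2 : F) ≠ 0 := by
    have h2n : ((2:ℕ) : F) ≠ 0 := by
      rw [Ne, CharP.cast_eq_zero_iff F p]
      intro hdvd
      exact absurd (Nat.le_of_dvd (by norm_num) hdvd) (by omega)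
    exact_mod_cast h2n
  have h2p : (2:F)^p = 2 := by
    rw [show (2:F) = φ 2 from (map_ofNat φ 2).symm, ← map_pow, ZMod.pow_card]
  set u : F := (φ t + δ) / 2 with hu
  have h2u : 2 * u = φ t + δ := by
    rw [hu, mul_div_cancel₀ _ h2F]
  have h2up : 2 * u ^ p = φ t - δ := by
    have hpow : (2*u)^p = φ t - δ := by
      rw [h2u, add_pow_char, ← map_pow, ZMod.pow_card, hδp]
      ring
    rw [← hpow, mul_pow, h2p]
  have hδsq : δ ^ 2 = φ t ^ 2 - 16 := by
    rw [pow_two, ← hδ, ← map_pow]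
    have : φ (t^2 - 16) = φ (t^2) - φ 16 := map_sub φ _ _
    rw [this, map_ofNat φ 16]
  have hup1 : u ^ p * u = 4 := by
    have h4 : (2:F) * 2 ≠ 0 := mul_ne_zero h2F h2F
    apply mul_left_cancel₀ h4
    calc (2:F) * 2 * (u^p * u) = (2 * u^p) * (2 * u) := by ring
    _ = (φ t - δ) * (φ t + δ) := by rw [h2up, h2u]
    _ = φ t ^ 2 - δ ^ 2 := by ring
    _ = 16 := by rw [hδsq]; ring
    _ = 2 * 2 * 4 := by norm_num
  have hunorm : u ^ (p+1) = 4 := by rw [pow_succ]; exact hup1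
  have huup : u + u ^ p = φ t := by
    apply mul_left_cancel₀ h2F
    rw [mul_add, h2u, h2up]
    ring
  have h5t : φ (5 - t) = 5 - φ t := by
    rw [map_sub, map_ofNat φ 5]
  have hm : (u - 1) ^ (p + 1) = φ (5 - t) := by
    have hsub : (u - 1) ^ p = u ^ p - 1 := by
      rw [sub_pow_char, one_pow]
    rw [pow_succ, hsub, h5t]
    linear_combination hup1 - huup
  refine ⟨u - 1, ?_, ?_⟩
  · rintro ⟨y, hy⟩
    have h5t0 : (5:ZMod p) - t ≠ 0 := fun h => hns2 (h ▸ IsSquare.zero)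
    have hm0 : (u - 1) ≠ 0 := by
      intro h
      apply h5t0
      apply hφinj
      rw [map_zero, ← hm, h, zero_pow (by omega)]
    have hy0 : y ≠ 0 := by rintro rfl; exact hm0 (by rw [← hy]; ring)
    have hbig : (u - 1) ^ ((p + 1) * k) = 1 := by
      rw [← hy, ← pow_mul]
      have hexp : 2 * ((p + 1) * k) = Fintype.card F - 1 := by rw [hF]; omega
      rw [hexp]
      exact FiniteField.pow_card_sub_one_eq_one y hy0
    have hφ1 : φ ((5 - t) ^ k) = 1 := by
      rw [map_pow, ← hm, ← pow_mul]
      exact hbig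
    have h1 : (5 - t) ^ k = 1 := hφinj (by rw [hφ1, map_one])
    exact hns2 (by rw [FiniteField.isSquare_iff hcharZ h5t0, ZMod.card]; exact h1)
  · rw [show (1:F) + (u - 1) = u by ring]
    exact hunorm
end

section
/- Let p \geq 5 be a prime. Then there exists a non-square k in \mathbb{F}_p (k is not a square in \mathbb{F}_p) such that k^2 - 10k + 9 is also not a square in \mathbb{F}_p. -/
open Finset

theorem exists_nonsquare_k (p : ℕ) (hp : p.Prime) (hp5 : 5 ≤ p) :
    ∃ k : ZMod p, ¬ (∃ b : ZMod p, b^2 = k) ∧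
      ¬ (∃ b : ZMod p, b^2 = k^2 - 10*k + 9) := by
  haveI : Fact p.Prime := ⟨hp⟩
  set χ := quadraticChar (ZMod p) with hχ
  have hchar : ringChar (ZMod p) ≠ 2 := by
    rw [ZMod.ringChar_zmod_n]; omega
  have h8 : (8 : ZMod p) ≠ 0 := by
    have : ((8 : ℕ) : ZMod p) ≠ 0 := by
      rw [Ne, ZMod.natCast_eq_zero_iff]
      intro hdvd
      have h23 : (8:ℕ) = 2^3 := by norm_num
      rw [h23] at hdvd
      have : p ∣ 2 := hp.dvd_of_dvd_pow hdvd
      have := Nat.le_of_dvd (by norm_num) this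
      omega
    simpa using this
  have h3 : (3 : ZMod p) ≠ 0 := by
    have : ((3 : ℕ) : ZMod p) ≠ 0 := by
      rw [Ne, ZMod.natCast_eq_zero_iff]
      intro hdvd
      have := Nat.le_of_dvd (by norm_num) hdvd
      omega
    simpa using this
  -- the key character sum
  have hT : ∑ k : ZMod p, χ (k^2 - 10*k + 9) = -1 := by
    have h1 : ∑ k : ZMod p, χ (k^2 - 10*k + 9)
        = ∑ k ∈ univ.erase (1 : ZMod p), χ (k^2 - 10*k + 9) := by
      rw [← Finset.add_sum_erase _ _ (mem_univ (1 : ZMod p))]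
      have hz : (1:ZMod p)^2 - 10*1 + 9 = 0 := by ring
      rw [hz, MulChar.map_zero, zero_add]
    have h2 : ∑ k ∈ univ.erase (1 : ZMod p), χ (k^2 - 10*k + 9)
        = ∑ t ∈ univ.erase (1 : ZMod p), χ t := by
      apply Finset.sum_nbij' (i := fun k => 1 - 8*(k-1)⁻¹) (j := fun t => 1 + 8*(1-t)⁻¹)
      · intro k hk
        simp only [mem_erase, mem_univ, and_true] at hk ⊢
        intro hcontra
        have hk1 : k - 1 ≠ 0 := sub_ne_zero.mpr hk
        have : (8 : ZMod p) * (k-1)⁻¹ = 0 := by linear_combination -hcontra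
        rcases mul_eq_zero.mp this with h | h
        · exact h8 h
        · exact hk1 (inv_eq_zero.mp h)
      · intro t ht
        simp only [mem_erase, mem_univ, and_true] at ht ⊢
        intro hcontra
        have ht1 : (1 : ZMod p) - t ≠ 0 := sub_ne_zero.mpr (Ne.symm ht)
        have : (8 : ZMod p) * (1-t)⁻¹ = 0 := by linear_combination hcontra
        rcases mul_eq_zero.mp this with h | h
        · exact h8 h
        · exact ht1 (inv_eq_zero.mp h)
      · intro k hk
        simp only [mem_erase, mem_univ, and_true] at hk
        have hk1 : k - 1 ≠ 0 := sub_ne_zero.mpr hk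
        field_simp
        try ring
        linear_combination (k - 1) * inv_mul_cancel₀ h8
      · intro t ht
        simp only [mem_erase, mem_univ, and_true] at ht
        have ht1 : (1 : ZMod p) - t ≠ 0 := sub_ne_zero.mpr (Ne.symm ht)
        field_simp
        try ring
        linear_combination (t - 1) * inv_mul_cancel₀ h8
      · intro k hk
        simp only [mem_erase, mem_univ, and_true] at hk
        have hk1 : k - 1 ≠ 0 := sub_ne_zero.mpr hk
        have key : k^2 - 10*k + 9 = (k-1)^2 * (1 - 8*(k-1)⁻¹) := by
          field_simp
          try ring
        rw [key, map_mul, quadraticChar_sq_one' hk1, one_mul]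
    have h3' : ∑ t ∈ univ.erase (1 : ZMod p), χ t = -1 := by
      have := quadraticChar_sum_zero hchar
      rw [← Finset.add_sum_erase _ _ (mem_univ (1 : ZMod p))] at this
      simp only [map_one] at this
      linarith
    rw [h1, h2, h3']
  by_contra hcon
  push_neg at hcon
  have hsq : ∀ a : ZMod p, (∃ b : ZMod p, b^2 = a) ↔ IsSquare a := by
    intro a
    constructor
    · rintro ⟨b, hb⟩; exact ⟨b, by rw [← hb]; ring⟩
    · rintro ⟨r, hr⟩; exact ⟨r, by rw [hr]; ring⟩
  -- every nonsquare k has f k a square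
  have hmain : ∀ k : ZMod p, ¬ IsSquare k → IsSquare (k^2 - 10*k + 9) := by
    intro k hk
    have hne : ∀ b : ZMod p, b^2 ≠ k := fun b hb => hk ⟨b, by rw [← hb]; ring⟩
    exact (hsq _).mp (hcon k hne)
  have hnonneg : ∀ k : ZMod p, 0 ≤ χ k + χ (k^2 - 10*k + 9) := by
    intro k
    by_cases hk : IsSquare k
    · by_cases hk0 : k = 0
      · subst hk0
        have h9 : ((0:ZMod p)^2 - 10*0 + 9) = 3^2 := by ring
        rw [h9, quadraticChar_sq_one' h3]
        simp [hχ]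
      · have h1 : χ k = 1 := (quadraticChar_one_iff_isSquare hk0).mpr hk
        have h2 : -1 ≤ χ (k^2 - 10*k + 9) := by
          by_cases hz : k^2 - 10*k + 9 = 0
          · rw [hz]; simp [hχ]
          · rcases quadraticChar_dichotomy hz with h | h <;> simp [hχ, h]
        linarith
    · have hk0 : k ≠ 0 := fun h => hk (h ▸ IsSquare.zero)
      have h1 : χ k = -1 := quadraticChar_neg_one_iff_not_isSquare.mpr hk
      have hfz : k^2 - 10*k + 9 ≠ 0 := by
        intro hz
        have hfac : (k - 1) * (k - 9) = 0 := by linear_combination hz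
        rcases mul_eq_zero.mp hfac with h | h
        · exact hk ((sub_eq_zero.mp h) ▸ IsSquare.one)
        · have : k = 9 := sub_eq_zero.mp h
          exact hk (this ▸ ⟨3, by norm_num⟩)
      have h2 : χ (k^2 - 10*k + 9) = 1 :=
        (quadraticChar_one_iff_isSquare hfz).mpr (hmain k hk)
      linarith
  have : (0 : ℤ) ≤ ∑ k : ZMod p, (χ k + χ (k^2 - 10*k + 9)) :=
    Finset.sum_nonneg fun k _ => hnonneg k
  rw [Finset.sum_add_distrib, quadraticChar_sum_zero hchar, hT] at this
  norm_num at this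
end

section
/- Let p \geq 5 be a prime with p \equiv 1 \pmod{3}. Then the equation u^{p-1} + y^{p-1} + 1 = 0 has no solution with u, y \in \mathbb{F}_{p^2}^*. -/
theorem no_solution_p_one_mod_three (p : ℕ) (hp : p.Prime) (hp5 : 5 ≤ p) (h3 : p % 3 = 1)
    (F : Type) [Field F] [Fintype F] (hF : Fintype.card F = p^2) :
    ¬ ∃ u y : F, u ≠ 0 ∧ y ≠ 0 ∧ u^(p-1) + y^(p-1) + 1 = 0 := by
  -- characteristic of F is p
  have hq := ringChar F
  obtain ⟨n, hqp, hcard⟩ := FiniteField.card F (ringChar F)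
  have hring : ringChar F = p := by
    have hdvd : ringChar F ∣ p ^ 2 := by
      rw [← hF, hcard]; exact dvd_pow_self _ (by positivity)
    exact (Nat.prime_dvd_prime_iff_eq hqp hp).mp (hqp.dvd_of_dvd_pow hdvd)
  haveI hfact : Fact p.Prime := ⟨hp⟩
  haveI : CharP F p := hring ▸ ringChar.charP F
  rintro ⟨u, y, hu, hy, heq⟩
  set a := u ^ (p - 1) with ha_def
  set b := y ^ (p - 1) with hb_def
  have ha : a ≠ 0 := pow_ne_zero _ hu
  have hb : b ≠ 0 := pow_ne_zero _ hy
  -- a^(p+1) = 1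
  have hexp : (p - 1) * (p + 1) = p ^ 2 - 1 := by
    rw [Nat.sq_sub_sq p 1]; ring_nf
  have hA1 : a ^ (p + 1) = 1 := by
    rw [ha_def, ← pow_mul, hexp, ← hF, FiniteField.pow_card_sub_one_eq_one u hu]
  have hB1 : b ^ (p + 1) = 1 := by
    rw [hb_def, ← pow_mul, hexp, ← hF, FiniteField.pow_card_sub_one_eq_one y hy]
  -- Frobenius
  have hfrob : a ^ p + b ^ p + 1 = 0 := by
    have h := congrArg (frobenius F p) heq
    rw [map_zero, map_add, map_add, map_one, frobenius_def, frobenius_def] at h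
    exact h
  have hap : a ^ p = a⁻¹ := by
    field_simp
    rw [← pow_succ a p]; exact hA1
  have hbp : b ^ p = b⁻¹ := by
    field_simp
    rw [← pow_succ b p]; exact hB1
  rw [hap, hbp] at hfrob
  have hfrob' : b + a + a * b = 0 := by
    field_simp at hfrob
    linear_combination hfrob
  -- derive a^2 + a + 1 = 0
  have hA : a ^ 2 + a + 1 = 0 := by linear_combination (a + 1) * heq - hfrob'
  have hcube : a ^ 3 = 1 := by linear_combination (a - 1) * hA
  -- a^(p+1) = a^2
  have hsq : a ^ 2 = 1 := by
    have hdm : p + 1 = 3 * (p / 3) + 2 := by omega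
    rw [hdm, pow_add, pow_mul, hcube, one_pow, one_mul] at hA1
    exact hA1
  have ha2 : a = -2 := by linear_combination hA - hsq
  have h3F : (3 : F) = 0 := by rw [ha2] at hsq; linear_combination hsq
  have : (p : ℕ) ∣ 3 := by
    have := (CharP.cast_eq_zero_iff F p 3).mp (by exact_mod_cast h3F)
    exact this
  have := Nat.le_of_dvd (by norm_num) this
  omega
end

section
/- Let p \geq 5 be a prime. The equation y^{p^2-1} + z^{p^2-1} + 1 = 0 has no solution with y, z \in \mathbb{F}_{p^4}^*. Consequently, for all nonzero u, v \in \mathbb{F}_{p^4}, the map x \mapsto 2uv\, x^{p^2} + (2uv^{p^2} + 2u^{p^2}v)\, x is a bijection of \mathbb{F}_{p^4}, i.e. the monomial x^{2+p^2} is 2-PN over \mathbb{F}_{p^4}. -/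
theorem twoPN_two_add_p_sq (p : ℕ) (hp : p.Prime) (hp5 : 5 ≤ p)
    (F : Type) [Field F] [Fintype F] (hF : Fintype.card F = p^4) :
    (¬ ∃ y z : F, y ≠ 0 ∧ z ≠ 0 ∧ y^(p^2-1) + z^(p^2-1) + 1 = 0) ∧
    (∀ u v : F, u ≠ 0 → v ≠ 0 →
      Function.Bijective (fun x : F =>
        2*u*v*x^(p^2) + (2*u*v^(p^2) + 2*u^(p^2)*v)*x)) := by
  haveI : Fact p.Prime := ⟨hp⟩
  -- characteristic
  haveI hchar : CharP F p := by
    obtain ⟨r, hr⟩ := CharP.exists F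
    haveI := hr
    obtain ⟨n, hrp, hn⟩ := FiniteField.card F r
    have hpr : p = r := by
      have hd : p ∣ r ^ (n : ℕ) := by
        rw [← hn, hF]; exact dvd_pow_self p (by norm_num)
      exact (Nat.prime_dvd_prime_iff_eq hp hrp).mp (hp.dvd_of_dvd_pow hd)
    subst hpr; exact hr
  have h2F : (2 : F) ≠ 0 := by
    intro h
    have := (CharP.cast_eq_zero_iff F p 2).mp (by exact_mod_cast h)
    have := Nat.le_of_dvd (by norm_num) this
    omega
  have hq1 : 1 ≤ p ^ 2 := Nat.one_le_pow _ _ hp.pos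
  have hm : (p ^ 2 - 1) + 1 = p ^ 2 := by omega
  have hoddsq : Odd (p ^ 2) := (hp.odd_of_ne_two (by omega)).pow
  -- norm equals one
  have norm1 : ∀ w : F, w ≠ 0 → (w ^ (p ^ 2 - 1)) ^ (p ^ 2 + 1) = 1 := by
    intro w hw
    have hcard : w ^ (p ^ 4) = w := by rw [← hF]; exact FiniteField.pow_card w
    have hexp : (p ^ 2 - 1) * (p ^ 2 + 1) + 1 = p ^ 4 := by
      obtain ⟨m, hm2⟩ := Nat.exists_eq_add_of_le hq1
      have h4 : p ^ 4 = p ^ 2 * p ^ 2 := by ring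
      rw [h4, hm2]
      simp only [Nat.add_sub_cancel_left]
      ring
    have h1 : (w ^ (p ^ 2 - 1)) ^ (p ^ 2 + 1) * w = 1 * w := by
      rw [← pow_mul, ← pow_succ, hexp, hcard, one_mul]
    exact mul_right_cancel₀ hw h1
  have part1 : ¬ ∃ y z : F, y ≠ 0 ∧ z ≠ 0 ∧ y^(p^2-1) + z^(p^2-1) + 1 = 0 := by
    rintro ⟨y, z, hy, hz, heq⟩
    set a := y ^ (p ^ 2 - 1) with ha
    have ha0 : a ≠ 0 := pow_ne_zero _ hy
    have hna : a ^ (p ^ 2 + 1) = 1 := norm1 y hy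
    have hnb : (z ^ (p ^ 2 - 1)) ^ (p ^ 2 + 1) = 1 := norm1 z hz
    have hb : z ^ (p ^ 2 - 1) = -(1 + a) := by linear_combination heq
    rw [hb] at hnb
    have hainv : a ^ (p ^ 2) = a⁻¹ := by
      have h1 : a ^ (p ^ 2) * a = 1 := by rw [← pow_succ]; exact hna
      exact eq_inv_of_mul_eq_one_left h1
    have hfrob : (1 + a) ^ (p ^ 2) = 1 + a ^ (p ^ 2) := by
      have := add_pow_char_pow (p := p) (n := 2) (x := (1 : F)) (y := a)
      simpa using this
    rw [pow_succ, Odd.neg_pow hoddsq, hfrob, hainv, neg_mul_neg] at hnb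
    -- hnb : (1 + a⁻¹) * (1 + a) = 1
    have hE : a ^ 2 + a + 1 = 0 := by
      have h1 : (1 + a⁻¹) * (1 + a) * a = 1 * a := by rw [hnb]
      rw [inv_eq_one_div] at h1
      field_simp at h1
      linear_combination h1
    have ha3 : a ^ 3 = 1 := by linear_combination (a - 1) * hE
    obtain ⟨k, hk⟩ : ∃ k, p ^ 2 = 3 * k + 1 := by
      have h3p : ¬ (3 ∣ p) := by
        intro h
        have := (Nat.prime_dvd_prime_iff_eq (by norm_num) hp).mp h
        omega
      have hm3 : p % 3 = 1 ∨ p % 3 = 2 := by omega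
      have h2 : p ^ 2 % 3 = 1 := by
        rw [Nat.pow_mod]; rcases hm3 with h | h <;> simp [h]
      exact ⟨p ^ 2 / 3, by omega⟩
    have hap : a ^ (p ^ 2) = a := by
      rw [hk, pow_add, pow_mul, ha3, one_pow, pow_one, one_mul]
    rw [hainv] at hap
    have haa : a * a = 1 := by
      nth_rewrite 1 [← hap]
      exact inv_mul_cancel₀ ha0
    have ha1 : a = 1 := by linear_combination ha3 - a * haa
    rw [ha1] at hE
    have h3 : (3 : F) = 0 := by linear_combination hE
    have := (CharP.cast_eq_zero_iff F p 3).mp (by exact_mod_cast h3)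
    have := Nat.le_of_dvd (by norm_num) this
    omega
  refine ⟨part1, ?_⟩
  intro u v hu hv
  rw [← Finite.injective_iff_bijective]
  have hker : ∀ x : F, 2*u*v*x^(p^2) + (2*u*v^(p^2) + 2*u^(p^2)*v)*x = 0 → x = 0 := by
    intro x hx
    by_contra hx0
    have hpow : ∀ w : F, w ^ (p ^ 2) = w ^ (p ^ 2 - 1) * w := fun w => by
      rw [← pow_succ, hm]
    rw [hpow x, hpow v, hpow u] at hx
    have hfac : (2 * u * v * x) * (x ^ (p ^ 2 - 1) + v ^ (p ^ 2 - 1) + u ^ (p ^ 2 - 1)) = 0 := by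
      linear_combination hx
    have hne : (2 : F) * u * v * x ≠ 0 :=
      mul_ne_zero (mul_ne_zero (mul_ne_zero h2F hu) hv) hx0
    have hsum : x ^ (p ^ 2 - 1) + v ^ (p ^ 2 - 1) + u ^ (p ^ 2 - 1) = 0 :=
      (mul_eq_zero.mp hfac).resolve_left hne
    apply part1
    refine ⟨u / x, v / x, div_ne_zero hu hx0, div_ne_zero hv hx0, ?_⟩
    have hxm : x ^ (p ^ 2 - 1) ≠ 0 := pow_ne_zero _ hx0
    rw [div_pow, div_pow]
    field_simp
    linear_combination hsum
  intro x1 x2 hx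
  simp only at hx
  have hsub : 2*u*v*(x1 - x2)^(p^2) + (2*u*v^(p^2) + 2*u^(p^2)*v)*(x1 - x2) = 0 := by
    rw [sub_pow_char_pow (p := p) (n := 2)]
    linear_combination hx
  have := hker _ hsub
  exact sub_eq_zero.mp this
end

section
/- Let p \geq 7 be a prime. The equation y^{p-1} + z^{p-1} + t^{p-1} = 0 has a solution with y, z, t \in \mathbb{F}_{p^4}^*. -/
open Finset in
open scoped Classical in
lemma exists_double_nonsquare (p : ℕ) (hp : p.Prime) (hp7 : 7 ≤ p) :
    ∃ s : ZMod p, ¬ IsSquare (s^2 - 4) ∧ ¬ IsSquare (17 - 4*s) := by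
  haveI : Fact p.Prime := ⟨hp⟩
  by_contra hcon
  push_neg at hcon
  have hcard : Fintype.card (ZMod p) = p := ZMod.card p
  have h4 : (4 : ZMod p) ≠ 0 := by
    have hnd : ¬ (p ∣ 4) := by
      intro h
      have := Nat.le_of_dvd (by norm_num) h
      omega
    have : ((4:ℕ) : ZMod p) ≠ 0 := by
      rw [Ne, ZMod.natCast_eq_zero_iff]
      exact hnd
    simpa using this
  have h2 : (2 : ZMod p) ≠ 0 := by
    intro h; apply h4; rw [show (4:ZMod p) = 2*2 by norm_num, h, mul_zero]
  have h2ne : (2 : ZMod p) ≠ -2 := by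
    intro h
    exact h4 (by linear_combination h)
  -- finsets
  set SB : Finset (ZMod p) := univ.filter (fun s : ZMod p => IsSquare (s^2 - 4)) with hSB
  set SB' : Finset (ZMod p) := univ.filter (fun s : ZMod p => IsSquare (s^2 - 4) ∧ s^2 - 4 ≠ 0) with hSB'
  set SC : Finset (ZMod p) := univ.filter (fun s : ZMod p => IsSquare (17 - 4*s)) with hSC
  set Sq : Finset (ZMod p) := univ.filter (fun t : ZMod p => IsSquare t) with hSq
  set Sq' : Finset (ZMod p) := univ.filter (fun t : ZMod p => IsSquare t ∧ t ≠ 0) with hSq'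
  set Uf : Finset (ZMod p) := univ.filter (fun u : ZMod p => u ≠ 2 ∧ u ≠ -2) with hUf
  -- card Uf = p - 2
  have hUfcard : Uf.card = p - 2 := by
    have : Uf = ({2, -2} : Finset (ZMod p))ᶜ := by
      ext u; simp [hUf, not_or]
    rw [this, card_compl, hcard, card_pair h2ne]
  -- double counting 1 : SB'.card * 2 ≤ Uf.card * 1
  have hdc1 : SB'.card * 2 ≤ Uf.card * 1 := by
    apply card_mul_le_card_mul (fun s u => u^2 - 2*s*u + 4 = 0)
    · intro s hs
      rw [hSB', mem_filter] at hs
      obtain ⟨-, ⟨y, hy⟩, hnz⟩ := hs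
      have hy0 : y ≠ 0 := by rintro rfl; exact hnz (by rw [hy]; ring)
      have hne : s - y ≠ s + y := by
        intro h
        apply hy0
        have h2y : (2:ZMod p) * y = 0 := by linear_combination -h
        exact (mul_eq_zero.mp h2y).resolve_left h2
      have hmem : ∀ z : ZMod p, z^2 - 2*s*z + 4 = 0 → z ∈ Uf.bipartiteAbove (fun s u => u^2 - 2*s*u + 4 = 0) s := by
        intro z hz
        rw [mem_bipartiteAbove]
        refine ⟨?_, hz⟩
        rw [hUf, mem_filter]
        refine ⟨mem_univ _, ?_, ?_⟩
        · rintro rfl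
          -- 4 - 4s + 4 = 0 => s = 2, but then s^2-4 = 0
          apply hnz
          have hs2 : s = 2 := by
            have h4s : (4:ZMod p) * s = 8 := by linear_combination -hz
            have : (4:ZMod p) * s = 4 * 2 := by rw [h4s]; norm_num
            exact mul_left_cancel₀ h4 this
          rw [hs2]; ring
        · rintro rfl
          apply hnz
          have hs2 : s = -2 := by
            have h4s : (4:ZMod p) * s = -8 := by linear_combination hz
            have : (4:ZMod p) * s = 4 * (-2) := by rw [h4s]; norm_num
            exact mul_left_cancel₀ h4 this
          rw [hs2]; ring
      have hsub : ({s - y, s + y} : Finset (ZMod p)) ⊆ Uf.bipartiteAbove (fun s u => u^2 - 2*s*u + 4 = 0) s := by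
        intro z hz
        rcases mem_insert.mp hz with rfl | hz
        · exact hmem _ (by linear_combination -hy)
        · rw [mem_singleton] at hz; subst hz
          exact hmem _ (by linear_combination -hy)
      calc 2 = ({s - y, s + y} : Finset (ZMod p)).card := (card_pair hne).symm
        _ ≤ _ := card_le_card hsub
    · intro u hu
      apply card_le_one.mpr
      intro a ha b hb
      rw [mem_bipartiteBelow] at ha hb
      have hu0 : u ≠ 0 := by
        rintro rfl
        apply h4
        linear_combination ha.2
      have : (2*u) * a = (2*u) * b := by linear_combination hb.2 - ha.2
      exact mul_left_cancel₀ (mul_ne_zero h2 hu0) this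
  -- double counting 2 : Sq'.card * 2 ≤ (univ.erase 0).card * 1
  have hdc2 : Sq'.card * 2 ≤ (univ.erase (0 : ZMod p)).card * 1 := by
    apply card_mul_le_card_mul (fun t y => y^2 = t)
    · intro t ht
      rw [hSq', mem_filter] at ht
      obtain ⟨-, ⟨y, hy⟩, h0⟩ := ht
      have hy0 : y ≠ 0 := by rintro rfl; exact h0 (by rw [hy]; ring)
      have hne : y ≠ -y := by
        intro h
        apply hy0
        have h2y : (2:ZMod p) * y = 0 := by linear_combination h
        exact (mul_eq_zero.mp h2y).resolve_left h2
      have hsub : ({y, -y} : Finset (ZMod p)) ⊆ (univ.erase (0:ZMod p)).bipartiteAbove (fun t y => y^2 = t) t := by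
        intro z hz
        rw [mem_bipartiteAbove, mem_erase]
        rcases mem_insert.mp hz with rfl | hz
        · exact ⟨⟨hy0, mem_univ _⟩, by rw [hy]; ring⟩
        · rw [mem_singleton] at hz; subst hz
          exact ⟨⟨neg_ne_zero.mpr hy0, mem_univ _⟩, by rw [hy]; ring⟩
      calc 2 = ({y, -y} : Finset (ZMod p)).card := (card_pair hne).symm
        _ ≤ _ := card_le_card hsub
    · intro y hy
      apply card_le_one.mpr
      intro a ha b hb
      rw [mem_bipartiteBelow] at ha hb
      rw [← ha.2, ← hb.2]
  have herase : (univ.erase (0 : ZMod p)).card = p - 1 := by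
    rw [card_erase_of_mem (mem_univ _), card_univ, hcard]
  -- SB ⊆ SB' ∪ {2, -2}
  have hSBsub : SB ⊆ SB' ∪ {2, -2} := by
    intro s hs
    rw [hSB, mem_filter] at hs
    by_cases h0 : s^2 - 4 = 0
    · apply mem_union_right
      have : (s - 2) * (s + 2) = 0 := by linear_combination h0
      rcases mul_eq_zero.mp this with h | h
      · simp [sub_eq_zero.mp h]
      · simp [show s = -2 by linear_combination h]
    · exact mem_union_left _ (by rw [hSB', mem_filter]; exact ⟨mem_univ _, hs.2, h0⟩)
  have hSBcard : SB.card ≤ SB'.card + 2 := by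
    calc SB.card ≤ (SB' ∪ {2,-2}).card := card_le_card hSBsub
      _ ≤ SB'.card + ({2,-2} : Finset (ZMod p)).card := card_union_le _ _
      _ ≤ SB'.card + 2 := by rw [card_pair h2ne]
  -- SC.card ≤ Sq.card ≤ Sq'.card + 1
  have hSCcard : SC.card ≤ Sq.card := by
    apply card_le_card_of_injOn (fun s => 17 - 4*s)
    · intro s hs
      rw [hSC, mem_coe, mem_filter] at hs
      rw [hSq, mem_coe, mem_filter]
      exact ⟨mem_univ _, hs.2⟩
    · intro a _ b _ h
      simp only at h
      have : (4:ZMod p) * a = 4 * b := by linear_combination -h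
      exact mul_left_cancel₀ h4 this
  have hSqcard : Sq.card ≤ Sq'.card + 1 := by
    have : Sq ⊆ Sq' ∪ {0} := by
      intro t ht
      rw [hSq, mem_filter] at ht
      by_cases h0 : t = 0
      · exact mem_union_right _ (by simp [h0])
      · exact mem_union_left _ (by rw [hSq', mem_filter]; exact ⟨mem_univ _, ht.2, h0⟩)
    calc Sq.card ≤ (Sq' ∪ {0}).card := card_le_card this
      _ ≤ Sq'.card + 1 := by simpa using card_union_le Sq' {0}
  -- univ ⊆ SB ∪ SC
  have huniv : (univ : Finset (ZMod p)) ⊆ SB ∪ SC := by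
    intro s _
    by_cases hB : IsSquare (s^2 - 4)
    · exact mem_union_left _ (by rw [hSB, mem_filter]; exact ⟨mem_univ _, hB⟩)
    · exact mem_union_right _ (by rw [hSC, mem_filter]; exact ⟨mem_univ _, hcon s hB⟩)
  -- {2,-2} ⊆ SB ∩ SC
  have hinter : ({2, -2} : Finset (ZMod p)) ⊆ SB ∩ SC := by
    intro s hs
    rw [mem_inter, hSB, hSC, mem_filter, mem_filter]
    rcases mem_insert.mp hs with rfl | hs
    · refine ⟨⟨mem_univ _, by rw [show (2:ZMod p)^2 - 4 = 0 by ring]; exact IsSquare.zero⟩,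
        ⟨mem_univ _, ⟨3, by norm_num⟩⟩⟩
    · rw [mem_singleton] at hs; subst hs
      refine ⟨⟨mem_univ _, by rw [show (-2:ZMod p)^2 - 4 = 0 by ring]; exact IsSquare.zero⟩,
        ⟨mem_univ _, ⟨5, by norm_num⟩⟩⟩
  have hic : 2 ≤ (SB ∩ SC).card := by
    calc 2 = ({2,-2} : Finset (ZMod p)).card := (card_pair h2ne).symm
      _ ≤ _ := card_le_card hinter
  have hucard : p ≤ (SB ∪ SC).card := by
    calc p = (univ : Finset (ZMod p)).card := by rw [card_univ, hcard]
      _ ≤ _ := card_le_card huniv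
  have hkey := Finset.card_union_add_card_inter SB SC
  omega

lemma pow_sub_one_surj_on_roots (p : ℕ) (hp : p.Prime) (hp7 : 7 ≤ p)
    (F : Type) [Field F] [Fintype F] (hF : Fintype.card F = p^4)
    (a : F) (ha : a ≠ 0) (haN : a ^ ((p^2+1)*(p+1)) = 1) :
    ∃ y : F, y ≠ 0 ∧ y ^ (p-1) = a := by
  classical
  obtain ⟨g, hg⟩ := IsCyclic.exists_generator (α := Fˣ)
  have horder : orderOf g = p^4 - 1 := by
    rw [orderOf_eq_card_of_forall_mem_zpowers hg, Nat.card_eq_fintype_card,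
      Fintype.card_units, hF]
  set u : Fˣ := Units.mk0 a ha with hu
  have huN : u ^ ((p^2+1)*(p+1)) = 1 := by
    ext
    push_cast
    exact haN
  obtain ⟨m, hm⟩ : u ∈ Submonoid.powers g := by
    rw [mem_powers_iff_mem_zpowers]; exact hg u
  simp only at hm
  have hdvd : (p^4 - 1) ∣ m * ((p^2+1)*(p+1)) := by
    rw [← horder]
    apply orderOf_dvd_of_pow_eq_one
    rw [pow_mul, hm, huN]
  have hfact : p^4 - 1 = (p-1) * ((p^2+1)*(p+1)) := by
    have h1 : 1 ≤ p := by omega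
    have h4 : 1 ≤ p^4 := Nat.one_le_pow _ _ (by omega)
    zify [h1, h4]
    ring
  have hNpos : 0 < (p^2+1)*(p+1) := by positivity
  have hdvd2 : (p - 1) ∣ m := by
    rw [hfact] at hdvd
    exact (Nat.mul_dvd_mul_iff_right hNpos).mp hdvd
  obtain ⟨j, hj⟩ := hdvd2
  refine ⟨((g ^ j : Fˣ) : F), Units.ne_zero _, ?_⟩
  have : (g ^ j) ^ (p - 1) = u := by
    rw [← pow_mul, mul_comm, ← hj, hm]
  calc ((g ^ j : Fˣ) : F) ^ (p-1) = (((g ^ j) ^ (p-1) : Fˣ) : F) := by push_cast; ring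
    _ = a := by rw [this, hu]; simp

lemma half_odd_aux (X A : ℕ) (h : A = 2*X+1) : A / 2 = X := by omega

lemma sub_one_aux (X A : ℕ) (h : A = 2*X+1) : A - 1 = 2*X := by omega

theorem fermat_solution_p4 (p : ℕ) (hp : p.Prime) (hp7 : 7 ≤ p)
    (F : Type) [Field F] [Fintype F] (hF : Fintype.card F = p^4) :
    ∃ y z t : F, y ≠ 0 ∧ z ≠ 0 ∧ t ≠ 0 ∧
      y^(p-1) + z^(p-1) + t^(p-1) = 0 := by
  have exists_double_nonsquare := exists_double_nonsquare p hp hp7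
  have pow_sub_one_surj_on_roots := pow_sub_one_surj_on_roots p hp hp7 F hF
  haveI : Fact p.Prime := ⟨hp⟩
  have hpodd : p % 2 = 1 := Nat.odd_iff.mp (hp.odd_of_ne_two (by omega))
  obtain ⟨k, hk⟩ : ∃ k, p = 2*k+1 := ⟨p/2, by omega⟩
  -- characteristic of F is p
  have hrc : ringChar F = p := by
    have h0 : ((p^4 : ℕ) : F) = 0 := by rw [← hF]; exact FiniteField.cast_card_eq_zero F
    have hdvd : ringChar F ∣ p^4 := (ringChar.spec F (p^4)).mp h0
    have hprime : (ringChar F).Prime := CharP.char_is_prime F (ringChar F)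
    have := hprime.dvd_of_dvd_pow hdvd
    exact (Nat.prime_dvd_prime_iff_eq hprime hp).mp this
  haveI hcharF : CharP F p := hrc ▸ ringChar.charP F
  have hrcF2 : ringChar F ≠ 2 := by rw [hrc]; omega
  -- Euler criterion consequence in ZMod p
  have key : ∀ a : ZMod p, ¬ IsSquare a → a ^ k = -1 := by
    intro a ha
    have ha0 : a ≠ 0 := fun h => ha (h ▸ IsSquare.zero)
    have hrz : ringChar (ZMod p) ≠ 2 := by rw [ZMod.ringChar_zmod_n]; omega
    rcases FiniteField.pow_dichotomy hrz ha0 with h | h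
    · exact absurd ((FiniteField.isSquare_iff hrz ha0).mpr h) ha
    · rwa [ZMod.card p, show p / 2 = k by omega] at h
  -- the casting homomorphism
  set φ : ZMod p →+* F := ZMod.castHom (dvd_refl p) F with hφ
  have hinj : Function.Injective φ := φ.injective
  have hfrob : ∀ z : ZMod p, (φ z)^p = φ z := fun z => by rw [← map_pow, ZMod.pow_card]
  have hne : ∀ z : ZMod p, z ≠ 0 → φ z ≠ 0 := by
    intro z hz h
    exact hz (hinj (by rw [h, map_zero]))
  have hφ2 : φ 2 = 2 := map_ofNat φ 2
  have h2Z : (2 : ZMod p) ≠ 0 := by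
    have : ((2:ℕ) : ZMod p) ≠ 0 := by
      rw [Ne, ZMod.natCast_eq_zero_iff]
      intro h
      have := Nat.le_of_dvd (by norm_num) h
      omega
    simpa using this
  have h2F : (2 : F) ≠ 0 := by rw [← hφ2]; exact hne 2 h2Z
  have h2p : (2 : F)^p = 2 := by rw [← hφ2]; exact hfrob 2
  have h4p : (4 : F)^p = 4 := by
    have : (4:F) = 2 * 2 := by norm_num
    rw [this, mul_pow, h2p]
  set c : F := (2:F)⁻¹ with hcdef
  have hc2 : (2:F) * c = 1 := mul_inv_cancel₀ h2F
  have hcp : c^p = c := by rw [hcdef, inv_pow, h2p]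
  -- get s
  obtain ⟨s, hs1, hs2⟩ := exists_double_nonsquare
  have ht1z : s^2 - 4 ≠ 0 := fun h => hs1 (h ▸ IsSquare.zero)
  have ht2z : 17 - 4*s ≠ 0 := fun h => hs2 (h ▸ IsSquare.zero)
  have ht1 : (s^2 - 4)^k = -1 := key _ hs1
  have ht2 : (17 - 4*s)^k = -1 := key _ hs2
  set S : F := φ s with hSdef
  have hSp : S^p = S := hfrob s
  -- construct d with d*d = S^2-4 and d^p = -d
  have hT1 : IsSquare (φ (s^2 - 4)) := by
    rw [FiniteField.isSquare_iff hrcF2 (hne _ ht1z), hF]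
    have hdiv : p^4 / 2 = (p-1) * ((k+1)*(p^2+1)) := by
      apply half_odd_aux
      rw [sub_one_aux k p (by omega), hk]
      ring
    rw [hdiv, pow_mul, ← map_pow, ZMod.pow_card_sub_one_eq_one ht1z, map_one, one_pow]
  obtain ⟨d, hd⟩ := hT1
  have hd2 : d * d = S^2 - 4 := by
    rw [← hd, hSdef, map_sub, map_pow, map_ofNat]
  have hd0 : d ≠ 0 := by
    intro h
    apply hne _ ht1z
    rw [hd, h, mul_zero]
  have hdk : d^(2*k) = -1 := by
    calc d^(2*k) = (d*d)^k := by rw [pow_mul, pow_two]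
      _ = (φ (s^2-4))^k := by rw [hd]
      _ = φ ((s^2-4)^k) := (map_pow _ _ _).symm
      _ = -1 := by rw [ht1, map_neg, map_one]
  have hdp : d^p = -d := by
    rw [hk, pow_succ, hdk]; ring
  -- construct n
  set n : F := (S + d) * c with hndef
  have hnp : n^p = (S - d) * c := by
    rw [hndef, mul_pow, add_pow_char, hSp, hdp, hcp]
    ring
  have hprod : n * n^p = 1 := by
    rw [hnp, hndef]
    linear_combination (-(c*c))*hd2 + (2*c+1)*hc2
  have hsum : n + n^p = S := by
    rw [hnp, hndef]
    linear_combination S*hc2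
  have hn0 : n ≠ 0 := left_ne_zero_of_mul_eq_one hprod
  have hp2 : p^2 = p*p := by ring
  have hnp2 : n^(p^2) = n := by
    rw [hp2, pow_mul, hnp, mul_pow, sub_pow_char, hSp, hdp, hcp, hndef]
    ring
  -- w = 1 - 4n
  set w : F := 1 - 4*n with hwdef
  have hwp : w^p = 1 - 4*n^p := by
    rw [hwdef, sub_pow_char, one_pow, mul_pow, h4p]
  have hwnorm : w * w^p = 17 - 4*S := by
    rw [hwp, hwdef]
    linear_combination (-4)*hsum + 16*hprod
  have h17S : (17 - 4*S : F) = φ (17 - 4*s) := by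
    rw [map_sub, map_mul, hSdef, map_ofNat, map_ofNat]
  have h17ne : (17 - 4*S : F) ≠ 0 := by rw [h17S]; exact hne _ ht2z
  have hw0 : w ≠ 0 := by
    intro h
    apply h17ne
    rw [← hwnorm, h, zero_mul]
  have hwp2 : w^(p^2) = w := by
    rw [hp2, pow_mul, hwp, sub_pow_char, one_pow, mul_pow, h4p, ← pow_mul, ← hp2, hnp2, hwdef]
  have hp2pos : 1 ≤ p^2 := Nat.one_le_pow _ _ (by omega)
  have hwpow : w^(p^2 - 1) = 1 := by
    have h1 : w^(p^2-1) * w = w := by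
      rw [← pow_succ, show p^2 - 1 + 1 = p^2 by omega, hwp2]
    have := mul_right_cancel₀ hw0 (h1.trans (one_mul w).symm)
    exact this
  -- e with e*e = w and e^(p^2) = -e
  have hwsq : IsSquare w := by
    rw [FiniteField.isSquare_iff hrcF2 hw0, hF]
    have hdiv : p^4 / 2 = (p^2-1) * (2*k^2+2*k+1) := by
      apply half_odd_aux
      rw [sub_one_aux ((p+1)*k) (p^2) (by rw [hk]; ring)]
      rw [hk]; ring
    rw [hdiv, pow_mul, hwpow, one_pow]
  obtain ⟨e, he⟩ := hwsq
  have he0 : e ≠ 0 := by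
    intro h
    apply hw0
    rw [he, h, mul_zero]
  have hepow : e^(p^2-1) = -1 := by
    have hexp : p^2 - 1 = 2*((p+1)*k) := sub_one_aux ((p+1)*k) (p^2) (by rw [hk]; ring)
    have hw_pk : w^((p+1)*k) = -1 := by
      have hwp1 : w^(p+1) = 17 - 4*S := by rw [pow_succ, ← hwnorm]; ring
      calc w^((p+1)*k) = (w^(p+1))^k := by rw [pow_mul]
        _ = (φ (17-4*s))^k := by rw [hwp1, h17S]
        _ = φ ((17-4*s)^k) := (map_pow _ _ _).symm
        _ = -1 := by rw [ht2, map_neg, map_one]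
    calc e^(p^2-1) = ((e*e))^((p+1)*k) := by rw [hexp, pow_mul, pow_two]
      _ = w^((p+1)*k) := by rw [he]
      _ = -1 := hw_pk
  have hep2 : e^(p^2) = -e := by
    have : e^(p^2) = e^(p^2-1) * e := by
      rw [← pow_succ, show p^2 - 1 + 1 = p^2 by omega]
    rw [this, hepow]; ring
  -- x
  set x : F := (e - 1) * c with hxdef
  have hcp2 : c^(p^2) = c := by
    rw [hp2, pow_mul, hcp, hcp]
  have hxp2 : x^(p^2) = (-e - 1) * c := by
    rw [hxdef, mul_pow, sub_pow_char_pow (p := p) (n := 2), one_pow, hep2, hcp2]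
  have hee : e * e = 1 - 4*n := by rw [he] at hwdef; exact hwdef.symm ▸ rfl
  have hxprod : x * x^(p^2) = n := by
    rw [hxp2, hxdef]
    linear_combination (-(c*c))*hee + (n*(2*c+1))*hc2
  have hxsum : x + x^(p^2) = -1 := by
    rw [hxp2, hxdef]
    linear_combination (-1)*hc2
  have hx0 : x ≠ 0 := by
    intro h
    apply hn0
    rw [← hxprod, h, zero_mul]
  have hx20 : x^(p^2) ≠ 0 := by
    intro h
    apply hn0
    rw [← hxprod, h, mul_zero]
  -- N-th power conditions
  have hnpow : n^(p+1) = 1 := by rw [pow_succ, mul_comm, hprod]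
  have hxN : x ^ ((p^2+1)*(p+1)) = 1 := by
    rw [pow_mul]
    have : x^(p^2+1) = n := by rw [pow_succ, mul_comm, hxprod]
    rw [this, hnpow]
  have hx2N : (x^(p^2)) ^ ((p^2+1)*(p+1)) = 1 := by
    rw [← pow_mul, mul_comm (p^2), pow_mul, hxN, one_pow]
  obtain ⟨z, hz0, hz⟩ := pow_sub_one_surj_on_roots x hx0 hxN
  obtain ⟨t, ht0, ht⟩ := pow_sub_one_surj_on_roots (x^(p^2)) hx20 hx2N
  refine ⟨1, z, t, one_ne_zero, hz0, ht0, ?_⟩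
  rw [one_pow, hz, ht]
  linear_combination hxsum
end

section
/- Let p be a prime and a, b, k, l non-negative integers with l \leq k+1 \leq a < p and a + b \equiv k \pmod{p}. Then \binom{a}{k+1-l}\binom{b}{l} \equiv (-1)^l \binom{a}{k+1}\binom{k+1}{l} \pmod{p}. -/
open Finset in
lemma cast_choose_mul_factorial {R : Type*} [CommRing R] (n l : ℕ) :
    ((n.choose l * l.factorial : ℕ) : R) = ∏ i ∈ Finset.range l, ((n : R) - i) := by
  rw [mul_comm, ← Nat.descFactorial_eq_factorial_mul_choose]
  rcases le_or_gt l n with h | h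
  · rw [Nat.descFactorial_eq_prod_range, Nat.cast_prod]
    refine Finset.prod_congr rfl fun i hi => ?_
    rw [Nat.cast_sub (le_trans (Finset.mem_range.mp hi).le h)]
  · rw [Nat.descFactorial_eq_zero_iff_lt.mpr h, Nat.cast_zero]
    exact (Finset.prod_eq_zero (Finset.mem_range.mpr h)
      (by simp)).symm

theorem binom_congr (p a b k l : ℕ) (hp : p.Prime)
    (hl : l ≤ k+1) (hka : k+1 ≤ a) (hap : a < p)
    (hab : (a + b : ℤ) ≡ k [ZMOD p]) :
    ((a.choose (k+1-l) * b.choose l : ℕ) : ℤ) ≡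
      (-1 : ℤ)^l * (a.choose (k+1)) * ((k+1).choose l) [ZMOD p] := by
  haveI : Fact p.Prime := ⟨hp⟩
  rw [← ZMod.intCast_eq_intCast_iff] at hab ⊢
  push_cast at hab ⊢
  -- l! ≠ 0 in ZMod p
  have hlp : l < p := lt_of_le_of_lt (hl.trans hka) hap
  have hfac : ((l.factorial : ℕ) : ZMod p) ≠ 0 := by
    rw [Ne, ZMod.natCast_eq_zero_iff]
    intro hdvd
    exact absurd (hp.dvd_factorial.mp hdvd) (not_le.mpr hlp)
  apply mul_right_cancel₀ hfac
  have hb : (b : ZMod p) = (k : ZMod p) - a := by linear_combination hab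
  -- key natural identity
  have hnat : a.choose (k+1-l) * (a - (k+1) + l).choose l = a.choose (k+1) * (k+1).choose l := by
    have h1 : (k+1).choose l = (k+1).choose (k+1-l) := (Nat.choose_symm hl).symm
    rw [h1, Nat.choose_mul (n := a) (Nat.sub_le _ _), Nat.sub_sub_self hl]
    congr 2
    omega
  calc ((a.choose (k+1-l)) : ZMod p) * (b.choose l) * (l.factorial)
      = (a.choose (k+1-l) : ZMod p) * ((b.choose l * l.factorial : ℕ)) := by push_cast; ring
    _ = (a.choose (k+1-l) : ZMod p) * ∏ i ∈ Finset.range l, ((b : ZMod p) - i) := by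
        rw [cast_choose_mul_factorial]
    _ = (a.choose (k+1-l) : ZMod p) *
          ((-1)^l * ∏ i ∈ Finset.range l, (((a - (k+1) + l : ℕ) : ZMod p) - i)) := by
        congr 1
        have step1 : ∏ i ∈ Finset.range l, ((b : ZMod p) - i)
            = (-1)^l * ∏ i ∈ Finset.range l, ((a : ZMod p) - k + i) := by
          have : ∀ i ∈ Finset.range l, (b : ZMod p) - i = (-1) * ((a : ZMod p) - k + i) := by
            intro i _; rw [hb]; ring
          rw [Finset.prod_congr rfl this, Finset.prod_mul_distrib, Finset.prod_const,
            Finset.card_range]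
        have step2 : ∏ i ∈ Finset.range l, (((a - (k+1) + l : ℕ) : ZMod p) - i)
            = ∏ i ∈ Finset.range l, ((a : ZMod p) - k + i) := by
          rw [← Finset.prod_range_reflect (fun j => (a : ZMod p) - (k : ZMod p) + j) l]
          refine Finset.prod_congr rfl fun i hi => ?_
          have hi' : i < l := Finset.mem_range.mp hi
          have h1 : ((a - (k+1) + l : ℕ) : ZMod p) = (a : ZMod p) - (k+1) + l := by
            rw [Nat.cast_add, Nat.cast_sub hka]; push_cast; ring
          have h2 : (l - 1 - i : ℕ) = l - (i + 1) := by omega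
          have h3 : ((l - (i+1) : ℕ) : ZMod p) = (l : ZMod p) - (i+1) := by
            rw [Nat.cast_sub (by omega)]; push_cast; ring
          simp only [h1, h2, h3]
          ring
        rw [step1, step2]
    _ = (-1)^l * ((a.choose (k+1-l) : ZMod p) * (((a - (k+1) + l).choose l * l.factorial : ℕ))) := by
        rw [cast_choose_mul_factorial]; ring
    _ = (-1)^l * (((a.choose (k+1-l) * (a - (k+1) + l).choose l : ℕ)) * (l.factorial : ℕ)) := by
        push_cast; ring
    _ = (-1 : ZMod p)^l * (a.choose (k+1)) * ((k+1).choose l) * (l.factorial) := by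
        rw [hnat]; push_cast; ring
end
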